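/- arXiv:2603.04223 — 2 statements merged into one kernel-verified Lean document; each statement's English description precedes it below -/
import Mathlib

section
/- Let X and Y be random vectors in ℝ^p and ℝ^q with finite first moments, let η ∼ N(0, I_d) be independent of X, let E: ℝ^q → ℝ^m and H: ℝ^p × ℝ^d → ℝ^m be measurable, and let D: ℝ^m → ℝ^q be K-Lipschitz. If E‖Y − D(E(Y))‖₂ = 0 and W₁(P_{X, H(X,η)}, P_{X, E(Y)}) = 0, then (X, D(H(X,η))) has the same joint distribution as (X, Y), and for P_X-almost every x the law of D(H(x, η)) equals the conditional distribution of Y given X = x. -/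
open MeasureTheory ProbabilityTheory

/-- The 1-Wasserstein "distance" between two measures on `E`, with respect to a cost
function `c`: the infimum over all couplings of the integral of the cost. -/
noncomputable def W1 {E : Type*} [MeasurableSpace E] (c : E → E → ℝ) (μ ν : Measure E) : ℝ :=
  sInf ((fun γ : Measure (E × E) => ∫ z, c z.1 z.2 ∂γ) ''
    {γ | Measure.map Prod.fst γ = μ ∧ Measure.map Prod.snd γ = ν})

/-- The Euclidean (ℓ²) distance on a product of (pseudo)metric spaces. -/
noncomputable def pairDist {E F : Type*} [PseudoMetricSpace E] [PseudoMetricSpace F]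
    (a b : E × F) : ℝ :=
  Real.sqrt (dist a.1 b.1 ^ 2 + dist a.2 b.2 ^ 2)

section pairDistAux

variable {E F : Type*} [PseudoMetricSpace E] [PseudoMetricSpace F]

lemma pairDist_nonneg (a b : E × F) : 0 ≤ pairDist a b := Real.sqrt_nonneg _

lemma dist_le_pairDist (a b : E × F) : dist a b ≤ pairDist a b := by
  rw [Prod.dist_eq, pairDist]
  have h1 := dist_nonneg (x := a.1) (y := b.1)
  have h2 := dist_nonneg (x := a.2) (y := b.2)
  have hs := Real.sq_sqrt (show (0:ℝ) ≤ dist a.1 b.1 ^ 2 + dist a.2 b.2 ^ 2 by positivity)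
  have hsn := Real.sqrt_nonneg (dist a.1 b.1 ^ 2 + dist a.2 b.2 ^ 2)
  rcases max_cases (dist a.1 b.1) (dist a.2 b.2) with ⟨h, _⟩ | ⟨h, _⟩ <;> rw [h] <;> nlinarith

lemma pairDist_le_add (a b : E × F) : pairDist a b ≤ dist a.1 b.1 + dist a.2 b.2 := by
  rw [pairDist]
  have h1 := dist_nonneg (x := a.1) (y := b.1)
  have h2 := dist_nonneg (x := a.2) (y := b.2)
  rw [show dist a.1 b.1 + dist a.2 b.2 = Real.sqrt ((dist a.1 b.1 + dist a.2 b.2) ^ 2) from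
    (Real.sqrt_sq (by positivity)).symm]
  exact Real.sqrt_le_sqrt (by nlinarith)

lemma continuous_pairDist : Continuous (fun z : (E × F) × (E × F) => pairDist z.1 z.2) := by
  unfold pairDist
  fun_prop

end pairDistAux

section W1zero

variable {E F : Type*} [NormedAddCommGroup E] [NormedAddCommGroup F]
  [MeasurableSpace E] [MeasurableSpace F] [BorelSpace E] [BorelSpace F]
  [SecondCountableTopology E] [SecondCountableTopology F]

lemma integral_eq_of_W1_pairDist_eq_zero
    (μ ν : Measure (E × F)) [IsProbabilityMeasure μ] [IsProbabilityMeasure ν]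
    (hμ : Integrable (fun z : E × F => ‖z.1‖ + ‖z.2‖) μ)
    (hν : Integrable (fun z : E × F => ‖z.1‖ + ‖z.2‖) ν)
    (h : W1 pairDist μ ν = 0)
    (L : ℝ) (f : E × F → ℝ) (hL : 0 ≤ L) (hfc : Continuous f) (hfb : ∀ x, |f x| ≤ 1)
    (hfl : ∀ a b, |f a - f b| ≤ L * pairDist a b) :
    ∫ z, f z ∂μ = ∫ z, f z ∂ν := by
  have key : ∀ ε > (0:ℝ), |∫ z, f z ∂μ - ∫ z, f z ∂ν| ≤ L * ε := by
    intro ε hε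
    -- extract a good coupling
    have hSne : ((fun γ : Measure ((E × F) × (E × F)) => ∫ z, pairDist z.1 z.2 ∂γ) ''
        {γ | Measure.map Prod.fst γ = μ ∧ Measure.map Prod.snd γ = ν}).Nonempty := by
      refine ⟨_, ⟨μ.prod ν, ⟨?_, ?_⟩, rfl⟩⟩
      · simp
      · simp
    have hlt : sInf ((fun γ : Measure ((E × F) × (E × F)) => ∫ z, pairDist z.1 z.2 ∂γ) ''
        {γ | Measure.map Prod.fst γ = μ ∧ Measure.map Prod.snd γ = ν}) < ε := by
      rw [show sInf _ = W1 pairDist μ ν from rfl, h]; exact hε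
    obtain ⟨r, ⟨γ, ⟨hγ1, hγ2⟩, rfl⟩, hrε⟩ := exists_lt_of_csInf_lt hSne hlt
    -- γ is a probability measure
    haveI : IsProbabilityMeasure γ := by
      constructor
      have : (Measure.map Prod.fst γ) Set.univ = 1 := by rw [hγ1]; simp
      rwa [Measure.map_apply measurable_fst MeasurableSet.univ, Set.preimage_univ] at this
    -- integrability of the cost under γ
    have h1 : Integrable (fun z : (E × F) × (E × F) => ‖z.1.1‖ + ‖z.1.2‖) γ := by
      have := (integrable_map_measure (f := Prod.fst)
        ((continuous_fst.norm.add continuous_snd.norm).aestronglyMeasurable)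
        measurable_fst.aemeasurable).mp (by rwa [hγ1])
      exact this
    have h2 : Integrable (fun z : (E × F) × (E × F) => ‖z.2.1‖ + ‖z.2.2‖) γ := by
      have := (integrable_map_measure (f := Prod.snd)
        ((continuous_fst.norm.add continuous_snd.norm).aestronglyMeasurable)
        measurable_snd.aemeasurable).mp (by rwa [hγ2])
      exact this
    have hcost : Integrable (fun z : (E × F) × (E × F) => pairDist z.1 z.2) γ := by
      refine Integrable.mono' (h1.add h2) continuous_pairDist.aestronglyMeasurable ?_
      filter_upwards with z
      rw [Real.norm_eq_abs, abs_of_nonneg (pairDist_nonneg _ _)]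
      refine (pairDist_le_add _ _).trans ?_
      have e1 : dist z.1.1 z.2.1 ≤ ‖z.1.1‖ + ‖z.2.1‖ := by
        rw [dist_eq_norm]; exact norm_sub_le _ _
      have e2 : dist z.1.2 z.2.2 ≤ ‖z.1.2‖ + ‖z.2.2‖ := by
        rw [dist_eq_norm]; exact norm_sub_le _ _
      calc dist z.1.1 z.2.1 + dist z.1.2 z.2.2 ≤ (‖z.1.1‖ + ‖z.2.1‖) + (‖z.1.2‖ + ‖z.2.2‖) :=
            add_le_add e1 e2
        _ = ‖z.1.1‖ + ‖z.1.2‖ + (‖z.2.1‖ + ‖z.2.2‖) := by ring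
    -- transfer integrals
    have hμint : ∫ z, f z ∂μ = ∫ z, f z.1 ∂γ := by
      rw [← hγ1, integral_map measurable_fst.aemeasurable hfc.aestronglyMeasurable]
    have hνint : ∫ z, f z ∂ν = ∫ z, f z.2 ∂γ := by
      rw [← hγ2, integral_map measurable_snd.aemeasurable hfc.aestronglyMeasurable]
    have hint1 : Integrable (fun z : (E × F) × (E × F) => f z.1) γ := by
      refine Integrable.mono' (integrable_const 1)
        (hfc.comp continuous_fst).aestronglyMeasurable ?_
      filter_upwards with z; rw [Real.norm_eq_abs]; exact hfb _
    have hint2 : Integrable (fun z : (E × F) × (E × F) => f z.2) γ := by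
      refine Integrable.mono' (integrable_const 1)
        (hfc.comp continuous_snd).aestronglyMeasurable ?_
      filter_upwards with z; rw [Real.norm_eq_abs]; exact hfb _
    rw [hμint, hνint, ← integral_sub hint1 hint2]
    calc |∫ z, (f z.1 - f z.2) ∂γ| ≤ ∫ z, |f z.1 - f z.2| ∂γ := by
          simpa [Real.norm_eq_abs] using
            norm_integral_le_integral_norm (fun z : (E × F) × (E × F) => f z.1 - f z.2) (μ := γ)
      _ ≤ ∫ z, L * pairDist z.1 z.2 ∂γ := by
          refine integral_mono (hint1.sub hint2).abs (hcost.const_mul L) ?_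
          intro z; exact hfl _ _
      _ = L * ∫ z, pairDist z.1 z.2 ∂γ := integral_const_mul _ _
      _ ≤ L * ε := mul_le_mul_of_nonneg_left hrε.le hL
  have habs : |∫ z, f z ∂μ - ∫ z, f z ∂ν| ≤ 0 := by
    refine le_of_forall_pos_le_add ?_
    intro ε hε
    have := key (ε / (L + 1)) (by positivity)
    rw [zero_add]
    refine this.trans ?_
    calc L * (ε / (L+1)) ≤ (L+1) * (ε / (L+1)) := by
          refine mul_le_mul_of_nonneg_right (by linarith) (by positivity)
      _ = ε := by field_simp
  have := abs_nonpos_iff.mp habs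
  linarith [sub_eq_zero.mp this]

lemma eq_of_W1_pairDist_eq_zero
    (μ ν : Measure (E × F)) [IsProbabilityMeasure μ] [IsProbabilityMeasure ν]
    (hμ : Integrable (fun z : E × F => ‖z.1‖ + ‖z.2‖) μ)
    (hν : Integrable (fun z : E × F => ‖z.1‖ + ‖z.2‖) ν)
    (h : W1 pairDist μ ν = 0) : μ = ν := by
  have hclosed : ∀ S : Set (E × F), IsClosed S → μ S = ν S := by
    intro S hS
    rcases S.eq_empty_or_nonempty with rfl | hne
    · simp
    set f : ℕ → (E × F) → ℝ := fun n x => max (1 - (n + 1 : ℝ) * Metric.infDist x S) 0 with hf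
    have hfc : ∀ n, Continuous (f n) := by
      intro n
      exact ((continuous_const.sub
        (continuous_const.mul (Metric.continuous_infDist_pt S))).max continuous_const)
    have hfnonneg : ∀ n x, 0 ≤ f n x := fun n x => le_max_right _ _
    have hfle : ∀ n x, f n x ≤ 1 := by
      intro n x
      refine max_le ?_ zero_le_one
      have : 0 ≤ (n + 1 : ℝ) * Metric.infDist x S :=
        mul_nonneg (by positivity) Metric.infDist_nonneg
      linarith
    have hfb : ∀ n x, |f n x| ≤ 1 := fun n x => by
      rw [abs_of_nonneg (hfnonneg n x)]; exact hfle n x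
    have hfl : ∀ n a b, |f n a - f n b| ≤ (n + 1 : ℝ) * pairDist a b := by
      intro n a b
      have h1 : |f n a - f n b| ≤ |(1 - (n+1:ℝ) * Metric.infDist a S) -
          (1 - (n+1:ℝ) * Metric.infDist b S)| := by
        refine (abs_max_sub_max_le_max _ _ _ _).trans ?_
        simp
      have h2 : |(1 - (n+1:ℝ) * Metric.infDist a S) - (1 - (n+1:ℝ) * Metric.infDist b S)|
          = (n+1:ℝ) * |Metric.infDist a S - Metric.infDist b S| := by
        rw [show (1 - (n+1:ℝ) * Metric.infDist a S) - (1 - (n+1:ℝ) * Metric.infDist b S)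
            = (n+1:ℝ) * (Metric.infDist b S - Metric.infDist a S) by ring, abs_mul,
          abs_of_nonneg (show (0:ℝ) ≤ (n+1:ℝ) by positivity), abs_sub_comm]
      have h3 : |Metric.infDist a S - Metric.infDist b S| ≤ dist a b := by
        have := (Metric.lipschitz_infDist_pt S).dist_le_mul a b
        rwa [NNReal.coe_one, one_mul, Real.dist_eq] at this
      calc |f n a - f n b| ≤ (n+1:ℝ) * |Metric.infDist a S - Metric.infDist b S| := by
            rw [← h2]; exact h1
        _ ≤ (n+1:ℝ) * dist a b := by
            exact mul_le_mul_of_nonneg_left h3 (by positivity)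
        _ ≤ (n+1:ℝ) * pairDist a b := by
            exact mul_le_mul_of_nonneg_left (dist_le_pairDist a b) (by positivity)
    have heq : ∀ n, ∫ z, f n z ∂μ = ∫ z, f n z ∂ν := fun n =>
      integral_eq_of_W1_pairDist_eq_zero μ ν hμ hν h (n+1) (f n) (by positivity) (hfc n)
        (hfb n) (hfl n)
    have hlim : ∀ x, Filter.Tendsto (fun n => f n x) Filter.atTop
        (nhds (S.indicator (fun _ => (1:ℝ)) x)) := by
      intro x
      by_cases hx : x ∈ S
      · have : ∀ n, f n x = 1 := by
          intro n
          rw [hf]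
          simp only [Metric.infDist_zero_of_mem hx, mul_zero, sub_zero]
          exact max_eq_left zero_le_one
        rw [Set.indicator_of_mem hx]
        simp only [this]
        exact tendsto_const_nhds
      · have hd : 0 < Metric.infDist x S :=
          (hS.notMem_iff_infDist_pos hne).mp hx
        rw [Set.indicator_of_notMem hx]
        obtain ⟨N, hN⟩ := exists_nat_ge (1 / Metric.infDist x S)
        have hev : ∀ n ≥ N, f n x = 0 := by
          intro n hn
          rw [hf]
          refine max_eq_right ?_
          have : 1 / Metric.infDist x S ≤ (n + 1 : ℝ) := by
            refine hN.trans ?_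
            exact_mod_cast le_trans (Nat.cast_le.mpr hn) (by linarith)
          have h1 : 1 ≤ (n + 1 : ℝ) * Metric.infDist x S := by
            rw [div_le_iff₀ hd] at this
            linarith
          linarith
        refine Filter.Tendsto.congr' ?_ tendsto_const_nhds
        filter_upwards [Filter.eventually_ge_atTop N] with n hn
        exact (hev n hn).symm
    have hμlim : Filter.Tendsto (fun n => ∫ z, f n z ∂μ) Filter.atTop
        (nhds (∫ z, S.indicator (fun _ => (1:ℝ)) z ∂μ)) := by
      refine tendsto_integral_of_dominated_convergence (fun _ => 1)
        (fun n => (hfc n).aestronglyMeasurable) (integrable_const 1) ?_ ?_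
      · intro n; filter_upwards with z; rw [Real.norm_eq_abs]; exact hfb n z
      · filter_upwards with z; exact hlim z
    have hνlim : Filter.Tendsto (fun n => ∫ z, f n z ∂ν) Filter.atTop
        (nhds (∫ z, S.indicator (fun _ => (1:ℝ)) z ∂ν)) := by
      refine tendsto_integral_of_dominated_convergence (fun _ => 1)
        (fun n => (hfc n).aestronglyMeasurable) (integrable_const 1) ?_ ?_
      · intro n; filter_upwards with z; rw [Real.norm_eq_abs]; exact hfb n z
      · filter_upwards with z; exact hlim z
    have hind : ∫ z, S.indicator (fun _ => (1:ℝ)) z ∂μ = ∫ z, S.indicator (fun _ => (1:ℝ)) z ∂ν := by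
      refine tendsto_nhds_unique ?_ hνlim
      simpa only [heq] using hμlim
    rw [integral_indicator_const _ hS.measurableSet, integral_indicator_const _ hS.measurableSet]
      at hind
    simp only [smul_eq_mul, mul_one] at hind
    exact (ENNReal.toReal_eq_toReal_iff' (measure_ne_top μ S) (measure_ne_top ν S)).mp hind
  apply MeasureTheory.ext_of_generate_finite _ ?_ isPiSystem_isClosed
  · exact fun s hs => hclosed s hs
  · exact hclosed _ isClosed_univ
  · rw [BorelSpace.measurable_eq (α := E × F), borel_eq_generateFrom_isClosed]

end W1zero

/-- The standard Gaussian measure `N(0, I_d)` on `ℝ^d`. -/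
noncomputable def stdGaussian (d : ℕ) : Measure (EuclideanSpace ℝ (Fin d)) :=
  Measure.map (MeasurableEquiv.toLp 2 (Fin d → ℝ))
    (Measure.pi fun _ : Fin d => gaussianReal 0 1)

instance stdGaussian_isProbabilityMeasure (d : ℕ) : IsProbabilityMeasure (stdGaussian d) := by
  rw [_root_.stdGaussian]
  exact Measure.isProbabilityMeasure_map (MeasurableEquiv.measurable _).aemeasurable

/-- if `D` is `K`-Lipschitz, `E‖Y − D(E(Y))‖₂ = 0` and
`W₁(P_{X,H(X,η)}, P_{X,E(Y)}) = 0`, then `(X, D(H(X,η)))` has the same joint law as `(X,Y)`,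
and for `P_X`-a.e. `x` the law of `D(H(x,η))` equals the conditional law of `Y` given `X = x`. -/
theorem stmt5 {p q m d : ℕ} {Ω : Type*} [MeasurableSpace Ω] (P : Measure Ω)
    [IsProbabilityMeasure P]
    (X : Ω → EuclideanSpace ℝ (Fin p)) (Y : Ω → EuclideanSpace ℝ (Fin q))
    (η : Ω → EuclideanSpace ℝ (Fin d))
    (E : EuclideanSpace ℝ (Fin q) → EuclideanSpace ℝ (Fin m))
    (D : EuclideanSpace ℝ (Fin m) → EuclideanSpace ℝ (Fin q))
    (H : EuclideanSpace ℝ (Fin p) × EuclideanSpace ℝ (Fin d) → EuclideanSpace ℝ (Fin m))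
    (K : ℝ)
    (hX : Measurable X) (hY : Measurable Y) (hη : Measurable η)
    (hE : Measurable E) (hH : Measurable H)
    (hD : ∀ u v, dist (D u) (D v) ≤ K * dist u v)
    (hηlaw : P.map η = stdGaussian d) (hindep : IndepFun X η P)
    (hXint : Integrable (fun ω => ‖X ω‖) P)
    (hYint : Integrable (fun ω => ‖Y ω‖) P)
    (hEYint : Integrable (fun ω => ‖E (Y ω)‖) P)
    (hHint : Integrable (fun ω => ‖H (X ω, η ω)‖) P)
    (hrecon : ∫ ω, ‖Y ω - D (E (Y ω))‖ ∂P = 0)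
    (hmatch : W1 pairDist (P.map (fun ω => (X ω, H (X ω, η ω))))
        (P.map (fun ω => (X ω, E (Y ω)))) = 0) :
    P.map (fun ω => (X ω, D (H (X ω, η ω)))) = P.map (fun ω => (X ω, Y ω)) ∧
    ∀ᵐ x ∂(P.map X),
      Measure.map (fun e => D (H (x, e))) (stdGaussian d) = condDistrib Y X P x := by
  -- D is Lipschitz with constant |K|, hence continuous and measurable
  have hDlip : ∀ u v, dist (D u) (D v) ≤ |K| * dist u v := fun u v =>
    (hD u v).trans (mul_le_mul_of_nonneg_right (le_abs_self K) dist_nonneg)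
  have hDcont : Continuous D :=
    (LipschitzWith.of_dist_le_mul (K := ⟨|K|, abs_nonneg K⟩) hDlip).continuous
  have hDmeas : Measurable D := hDcont.measurable
  -- measurability of the joint maps
  have hm1 : Measurable (fun ω => (X ω, H (X ω, η ω))) :=
    hX.prodMk (hH.comp (hX.prodMk hη))
  have hm2 : Measurable (fun ω => (X ω, E (Y ω))) := hX.prodMk (hE.comp hY)
  haveI : IsProbabilityMeasure (P.map (fun ω => (X ω, H (X ω, η ω)))) :=
    Measure.isProbabilityMeasure_map hm1.aemeasurable
  haveI : IsProbabilityMeasure (P.map (fun ω => (X ω, E (Y ω)))) :=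
    Measure.isProbabilityMeasure_map hm2.aemeasurable
  -- Step A: the two joint laws coincide
  have hint1 : Integrable (fun z : EuclideanSpace ℝ (Fin p) × EuclideanSpace ℝ (Fin m) =>
      ‖z.1‖ + ‖z.2‖) (P.map (fun ω => (X ω, H (X ω, η ω)))) := by
    rw [integrable_map_measure (g := fun z : EuclideanSpace ℝ (Fin p) × EuclideanSpace ℝ (Fin m) =>
        ‖z.1‖ + ‖z.2‖) (continuous_fst.norm.add continuous_snd.norm).aestronglyMeasurable
      hm1.aemeasurable]
    exact hXint.add hHint
  have hint2 : Integrable (fun z : EuclideanSpace ℝ (Fin p) × EuclideanSpace ℝ (Fin m) =>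
      ‖z.1‖ + ‖z.2‖) (P.map (fun ω => (X ω, E (Y ω)))) := by
    rw [integrable_map_measure (g := fun z : EuclideanSpace ℝ (Fin p) × EuclideanSpace ℝ (Fin m) =>
        ‖z.1‖ + ‖z.2‖) (continuous_fst.norm.add continuous_snd.norm).aestronglyMeasurable
      hm2.aemeasurable]
    exact hXint.add hEYint
  have hAB : P.map (fun ω => (X ω, H (X ω, η ω))) = P.map (fun ω => (X ω, E (Y ω))) :=
    eq_of_W1_pairDist_eq_zero _ _ hint1 hint2 hmatch
  -- push through D
  have hpd : Measurable (Prod.map (id : EuclideanSpace ℝ (Fin p) → _) D) :=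
    measurable_id.prodMap hDmeas
  have hpart1 : P.map (fun ω => (X ω, D (H (X ω, η ω)))) = P.map (fun ω => (X ω, D (E (Y ω)))) := by
    have := congrArg (Measure.map (Prod.map (id : EuclideanSpace ℝ (Fin p) → _) D)) hAB
    rwa [Measure.map_map hpd hm1, Measure.map_map hpd hm2] at this
  -- Y = D (E Y) a.e.
  have hDEYbound : ∀ ω, ‖D (E (Y ω))‖ ≤ |K| * ‖E (Y ω)‖ + ‖D 0‖ := by
    intro ω
    calc ‖D (E (Y ω))‖ ≤ ‖D (E (Y ω)) - D 0‖ + ‖D 0‖ := by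
          simpa using norm_add_le (D (E (Y ω)) - D 0) (D 0)
      _ ≤ |K| * ‖E (Y ω)‖ + ‖D 0‖ := by
          have := hDlip (E (Y ω)) 0
          rw [dist_eq_norm, dist_eq_norm, sub_zero] at this
          linarith
  have hreconInt : Integrable (fun ω => ‖Y ω - D (E (Y ω))‖) P := by
    refine Integrable.mono' (hYint.add ((hEYint.const_mul |K|).add (integrable_const ‖D 0‖)))
      ((hY.sub (hDmeas.comp (hE.comp hY))).norm.aestronglyMeasurable) ?_
    filter_upwards with ω
    rw [Real.norm_eq_abs, abs_of_nonneg (norm_nonneg _)]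
    calc ‖Y ω - D (E (Y ω))‖ ≤ ‖Y ω‖ + ‖D (E (Y ω))‖ := norm_sub_le _ _
      _ ≤ ‖Y ω‖ + (|K| * ‖E (Y ω)‖ + ‖D 0‖) := by linarith [hDEYbound ω]
  have hYae : (fun ω => D (E (Y ω))) =ᵐ[P] Y := by
    have h0 : (fun ω => ‖Y ω - D (E (Y ω))‖) =ᵐ[P] 0 :=
      (integral_eq_zero_iff_of_nonneg (fun ω => norm_nonneg _) hreconInt).mp hrecon
    filter_upwards [h0] with ω hω
    have : Y ω - D (E (Y ω)) = 0 := by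
      simpa using norm_eq_zero.mp hω
    have := sub_eq_zero.mp this
    exact this.symm
  have hpart1' : P.map (fun ω => (X ω, D (H (X ω, η ω)))) = P.map (fun ω => (X ω, Y ω)) := by
    rw [hpart1]
    refine Measure.map_congr ?_
    filter_upwards [hYae] with ω hω
    rw [hω]
  -- Step C: the conditional law
  set ν := stdGaussian d with hν
  set κ : Kernel (EuclideanSpace ℝ (Fin p)) (EuclideanSpace ℝ (Fin q)) :=
    Kernel.map (Kernel.id ×ₖ Kernel.const _ ν) (fun xe => D (H xe)) with hκ
  have hκ_apply : ∀ x, κ x = ν.map (fun e => D (H (x, e))) := by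
    intro x
    rw [hκ, Kernel.map_apply _ (f := fun xe => D (H xe)) (hDmeas.comp hH), Kernel.prod_apply,
      Kernel.id_apply,
      Kernel.const_apply, Measure.dirac_prod,
      Measure.map_map (f := Prod.mk x) (g := fun xe => D (H xe)) (hDmeas.comp hH)
      measurable_prodMk_left]
    rfl
  haveI : IsMarkovKernel κ := by
    rw [hκ]
    exact Kernel.IsMarkovKernel.map _ (hDmeas.comp hH)
  haveI : IsProbabilityMeasure (P.map X) := Measure.isProbabilityMeasure_map hX.aemeasurable
  have hcomp : P.map (fun ω => (X ω, D (H (X ω, η ω)))) = (P.map X) ⊗ₘ κ := by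
    have hXη : P.map (fun ω => (X ω, η ω)) = (P.map X).prod ν := by
      rw [← hηlaw]
      exact (indepFun_iff_map_prod_eq_prod_map_map hX.aemeasurable hη.aemeasurable).mp hindep
    have hG : Measurable (fun z : EuclideanSpace ℝ (Fin p) × EuclideanSpace ℝ (Fin d) =>
        (z.1, D (H z))) := measurable_fst.prodMk (hDmeas.comp hH)
    have h1 : P.map (fun ω => (X ω, D (H (X ω, η ω)))) =
        Measure.map (fun z => (z.1, D (H z))) (P.map (fun ω => (X ω, η ω))) := by
      rw [Measure.map_map hG (hX.prodMk hη)]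
      rfl
    rw [h1, hXη]
    ext s hs
    rw [Measure.map_apply hG hs, Measure.prod_apply (hG hs), Measure.compProd_apply hs]
    refine lintegral_congr fun x => ?_
    rw [hκ_apply x, Measure.map_apply (f := fun e => D (H (x, e)))
      (hDmeas.comp (hH.comp measurable_prodMk_left)) (measurable_prodMk_left hs)]
    rfl
  have hfinal : ∀ᵐ x ∂(P.map X), κ x = condDistrib Y X P x :=
    (condDistrib_ae_eq_of_measure_eq_compProd_of_measurable (κ := κ) hX hY (by rw [← hpart1', hcomp])).symm
  refine ⟨hpart1', ?_⟩
  filter_upwards [hfinal] with x hx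
  rw [← hx, hκ_apply x]
end

section
/- Let μ and ν be probability measures on ℝ^d with finite second moments. Then W₁(μ, ν) ≤ √(2(∫‖x‖₂² dμ(x) + ∫‖x‖₂² dν(x))) · √(D_TV(μ, ν)). -/
open MeasureTheory ProbabilityTheory

/-- The total variation distance `sup_A |μ(A) − ν(A)|` over measurable sets `A`. -/
noncomputable def tvDist {α : Type*} [MeasurableSpace α] (μ ν : Measure α) : ℝ :=
  ⨆ A : {s : Set α // MeasurableSet s}, |(μ ↑A).toReal - (ν ↑A).toReal|

/-- Cauchy–Schwarz for integrals on a finite measure. -/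
lemma integral_le_sqrt_sq_mul_sqrt_mass {α : Type*} [MeasurableSpace α] (P : Measure α)
    [IsFiniteMeasure P] {f : α → ℝ} (hf0 : ∀ x, 0 ≤ f x) (hfm : AEStronglyMeasurable f P)
    (hf2 : Integrable (fun x => f x ^ 2) P) :
    ∫ x, f x ∂P ≤ Real.sqrt (∫ x, f x ^ 2 ∂P) * Real.sqrt (P Set.univ).toReal := by
  have hpq : Real.HolderConjugate 2 2 := Real.HolderConjugate.two_two
  have hf : MemLp f (ENNReal.ofReal 2) P := by
    rw [show ENNReal.ofReal 2 = 2 by simp]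
    exact (memLp_two_iff_integrable_sq hfm).2 hf2
  have hg : MemLp (fun _ : α => (1 : ℝ)) (ENNReal.ofReal 2) P := memLp_const 1
  have h := integral_mul_le_Lp_mul_Lq_of_nonneg hpq (Filter.Eventually.of_forall hf0)
    (Filter.Eventually.of_forall fun _ => (zero_le_one : (0:ℝ) ≤ 1)) hf hg
  have e1 : ∀ a : α, f a ^ (2 : ℝ) = f a ^ 2 := fun a => by
    rw [show (2 : ℝ) = ((2 : ℕ) : ℝ) by norm_num, Real.rpow_natCast]
  simp only [mul_one, e1, Real.one_rpow, integral_const, smul_eq_mul] at h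
  rw [Real.sqrt_eq_rpow, Real.sqrt_eq_rpow]
  simpa [Measure.real] using h

theorem main_aux {E : Type*} [NormedAddCommGroup E] [MeasurableSpace E] [BorelSpace E]
    [SecondCountableTopology E]
    (μ ν : Measure E) [IsProbabilityMeasure μ] [IsProbabilityMeasure ν]
    (hμ : Integrable (fun x => ‖x‖ ^ 2) μ) (hν : Integrable (fun x => ‖x‖ ^ 2) ν) :
    W1 dist μ ν
      ≤ Real.sqrt (2 * ((∫ x, ‖x‖ ^ 2 ∂μ) + ∫ x, ‖x‖ ^ 2 ∂ν)) * Real.sqrt (tvDist μ ν) := by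
  classical
  obtain ⟨ρ₁, ρ₂, hfin1, hfin2, hsing, hkey⟩ :
      ∃ ρ₁ ρ₂ : Measure E, IsFiniteMeasure ρ₁ ∧ IsFiniteMeasure ρ₂ ∧ ρ₁ ⟂ₘ ρ₂ ∧
        μ + ρ₂ = ν + ρ₁ := by
    set j := (μ.toSignedMeasure - ν.toSignedMeasure).toJordanDecomposition with hjdef
    refine ⟨j.posPart, j.negPart, inferInstance, inferInstance, j.mutuallySingular, ?_⟩
    have hj : j.posPart.toSignedMeasure - j.negPart.toSignedMeasure
        = μ.toSignedMeasure - ν.toSignedMeasure :=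
      (μ.toSignedMeasure - ν.toSignedMeasure).toSignedMeasure_toJordanDecomposition
    rw [← Measure.toSignedMeasure_eq_toSignedMeasure_iff,
      Measure.toSignedMeasure_add, Measure.toSignedMeasure_add]
    have h2 := sub_eq_sub_iff_add_eq_add.mp hj.symm
    rw [h2, add_comm]
  haveI := hfin1; haveI := hfin2
  obtain ⟨u, hu, hu1, hu2⟩ := hsing
  -- hu1 : ρ₁ u = 0, hu2 : ρ₂ uᶜ = 0
  have happ : ∀ t : Set E, μ t + ρ₂ t = ν t + ρ₁ t := by
    intro t
    have := congrArg (fun m : Measure E => m t) hkey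
    simpa [Measure.add_apply] using this
  have hmass : ρ₂ Set.univ = ρ₁ Set.univ := by
    have h := happ Set.univ
    simp only [measure_univ] at h
    exact (ENNReal.add_right_inj ENNReal.one_ne_top).mp h
  have hρ₁uc : ρ₁ uᶜ = ρ₁ Set.univ := by
    have := measure_add_measure_compl (μ := ρ₁) hu
    rw [hu1, zero_add] at this
    exact this
  have hle1 : ρ₁ ≤ μ := by
    refine Measure.le_iff.2 fun t ht => ?_
    have h1 : ρ₁ t ≤ ρ₁ (t ∩ uᶜ) := by
      have : ρ₁ t ≤ ρ₁ (t ∩ uᶜ) + ρ₁ (t ∩ u) := by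
        rw [← measure_inter_add_diff t hu.compl]
        simp [Set.diff_eq]
      have h0 : ρ₁ (t ∩ u) = 0 := measure_mono_null Set.inter_subset_right hu1
      simpa [h0] using this
    have h2 : ρ₂ (t ∩ uᶜ) = 0 := measure_mono_null Set.inter_subset_right hu2
    have h3 := happ (t ∩ uᶜ)
    rw [h2, add_zero] at h3
    calc ρ₁ t ≤ ρ₁ (t ∩ uᶜ) := h1
      _ ≤ ν (t ∩ uᶜ) + ρ₁ (t ∩ uᶜ) := le_add_self
      _ = μ (t ∩ uᶜ) := h3.symm
      _ ≤ μ t := measure_mono Set.inter_subset_left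
  set η : Measure E := μ - ρ₁ with hη_def
  have hη : η + ρ₁ = μ := Measure.sub_add_cancel_of_le hle1
  have hν' : ν = η + ρ₂ := by
    ext t ht
    have h3 := happ t
    have h4 : η t + ρ₁ t = μ t := by
      have := congrArg (fun m : Measure E => m t) hη
      simpa [Measure.add_apply] using this
    rw [← h4] at h3
    have h5 : ν t + ρ₁ t = (η t + ρ₂ t) + ρ₁ t := by
      rw [← h3]; ring
    have := WithTop.add_right_cancel (measure_ne_top ρ₁ t) h5
    simp [Measure.add_apply, this]
  set m : ENNReal := ρ₁ Set.univ with hm_def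
  set δ : ℝ := m.toReal with hδ_def
  have hδ0 : 0 ≤ δ := ENNReal.toReal_nonneg
  -- total variation lower bound
  have htv : δ ≤ tvDist μ ν := by
    have hbdd : BddAbove (Set.range fun A : {s : Set E // MeasurableSet s} =>
        |(μ ↑A).toReal - (ν ↑A).toReal|) := by
      refine ⟨1, ?_⟩
      rintro x ⟨A, rfl⟩
      have h1 : (μ ↑A).toReal ≤ 1 := by
        simpa using ENNReal.toReal_mono ENNReal.one_ne_top (prob_le_one (μ := μ))
      have h2 : (ν ↑A).toReal ≤ 1 := by
        simpa using ENNReal.toReal_mono ENNReal.one_ne_top (prob_le_one (μ := ν))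
      have h3 : (0:ℝ) ≤ (μ ↑A).toReal := ENNReal.toReal_nonneg
      have h4 : (0:ℝ) ≤ (ν ↑A).toReal := ENNReal.toReal_nonneg
      rw [abs_sub_le_iff]; constructor <;> linarith
    have hval : |(μ uᶜ).toReal - (ν uᶜ).toReal| = δ := by
      have h3 := happ uᶜ
      rw [hu2, add_zero, hρ₁uc] at h3
      have hr : (μ uᶜ).toReal = (ν uᶜ).toReal + δ := by
        rw [h3, ENNReal.toReal_add (measure_ne_top _ _) (measure_ne_top _ _), ← hδ_def]
      rw [hr]
      simp [abs_of_nonneg hδ0]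
    have := le_ciSup hbdd (⟨uᶜ, hu.compl⟩ : {s : Set E // MeasurableSet s})
    rw [hval] at this
    exact this
  -- the coupling
  have hdiag : Measurable fun x : E => (x, x) := measurable_id.prodMk measurable_id
  set P : Measure (E × E) := ρ₁.prod ρ₂ with hP_def
  set γ : Measure (E × E) := η.map (fun x => (x, x)) + m⁻¹ • P with hγ_def
  have hsmul : ∀ ρ : Measure E, ρ Set.univ = m → (m⁻¹ * m) • ρ = ρ := by
    intro ρ hρ
    rcases eq_or_ne m 0 with h0 | h0
    · have : ρ = 0 := Measure.measure_univ_eq_zero.mp (by rw [hρ, h0])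
      simp [this]
    · rw [ENNReal.inv_mul_cancel h0 (by rw [hm_def]; exact measure_ne_top _ _), one_smul]
  have hfst : Measure.map Prod.fst γ = μ := by
    rw [hγ_def, Measure.map_add _ _ measurable_fst, Measure.map_smul,
      Measure.map_map measurable_fst hdiag, hP_def, Measure.map_fst_prod]
    have he : (Prod.fst ∘ fun x : E => (x, x)) = id := rfl
    rw [he, Measure.map_id, hmass, smul_smul, hsmul ρ₁ hm_def.symm, hη]
  have hsnd : Measure.map Prod.snd γ = ν := by
    rw [hγ_def, Measure.map_add _ _ measurable_snd, Measure.map_smul,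
      Measure.map_map measurable_snd hdiag, hP_def, Measure.map_snd_prod]
    have he : (Prod.snd ∘ fun x : E => (x, x)) = id := rfl
    rw [he, Measure.map_id, ← hm_def, smul_smul, hsmul ρ₂ hmass, hν']
  -- W1 is at most the cost of this coupling
  have hRHS0 : (0:ℝ) ≤ Real.sqrt (2 * ((∫ x, ‖x‖ ^ 2 ∂μ) + ∫ x, ‖x‖ ^ 2 ∂ν)) *
      Real.sqrt (tvDist μ ν) := mul_nonneg (Real.sqrt_nonneg _) (Real.sqrt_nonneg _)
  have hW : W1 dist μ ν ≤ ∫ z : E × E, dist z.1 z.2 ∂γ := by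
    apply csInf_le
    · refine ⟨0, ?_⟩
      rintro x ⟨γ', -, rfl⟩
      exact integral_nonneg fun z => dist_nonneg
    · exact ⟨γ, ⟨hfst, hsnd⟩, rfl⟩
  refine hW.trans ?_
  by_cases hint : Integrable (fun z : E × E => dist z.1 z.2) γ
  swap
  · rw [integral_undef hint]; exact hRHS0
  obtain ⟨hintA, hintB⟩ := integrable_add_measure.mp (by rwa [hγ_def] at hint)
  have hIA : ∫ z : E × E, dist z.1 z.2 ∂(η.map fun x => (x, x)) = 0 := by
    rw [integral_map hdiag.aemeasurable continuous_dist.aestronglyMeasurable]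
    simp
  have hIB : ∫ z : E × E, dist z.1 z.2 ∂(m⁻¹ • P)
      = δ⁻¹ * ∫ z : E × E, dist z.1 z.2 ∂P := by
    rw [integral_smul_measure, ENNReal.toReal_inv, ← hδ_def, smul_eq_mul]
  rw [hγ_def, integral_add_measure hintA hintB, hIA, hIB, zero_add]
  -- degenerate case
  rcases eq_or_ne m 0 with hm0 | hm0
  · have hz : ρ₁ = 0 := Measure.measure_univ_eq_zero.mp (by rw [← hm_def, hm0])
    have : P = 0 := by rw [hP_def, hz, Measure.zero_prod]
    rw [this]
    simp only [integral_zero_measure, mul_zero]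
    exact hRHS0
  have hmtop : m ≠ ⊤ := by rw [hm_def]; exact measure_ne_top _ _
  have hδpos : 0 < δ := ENNReal.toReal_pos hm0 hmtop
  -- second moments on the product
  have hle2 : ρ₂ ≤ ν := by
    refine Measure.le_iff.2 fun t ht => ?_
    have h1 : ρ₂ t ≤ ρ₂ (t ∩ u) := by
      have : ρ₂ t ≤ ρ₂ (t ∩ u) + ρ₂ (t ∩ uᶜ) := by
        rw [← measure_inter_add_diff t hu]
        simp [Set.diff_eq]
      have h0 : ρ₂ (t ∩ uᶜ) = 0 := measure_mono_null Set.inter_subset_right hu2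
      simpa [h0] using this
    have h0 : ρ₁ (t ∩ u) = 0 := measure_mono_null Set.inter_subset_right hu1
    have h3 := happ (t ∩ u)
    rw [h0, add_zero] at h3
    calc ρ₂ t ≤ ρ₂ (t ∩ u) := h1
      _ ≤ μ (t ∩ u) + ρ₂ (t ∩ u) := le_add_self
      _ = ν (t ∩ u) := h3
      _ ≤ ν t := measure_mono Set.inter_subset_left
  have hsqm : AEStronglyMeasurable (fun x : E => ‖x‖ ^ 2) (P.map Prod.fst) :=
    (continuous_norm.pow 2).aestronglyMeasurable
  have hsqm' : AEStronglyMeasurable (fun x : E => ‖x‖ ^ 2) (P.map Prod.snd) :=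
    (continuous_norm.pow 2).aestronglyMeasurable
  have hmfst : P.map Prod.fst = m • ρ₁ := by rw [hP_def, Measure.map_fst_prod, hmass]
  have hmsnd : P.map Prod.snd = m • ρ₂ := by rw [hP_def, Measure.map_snd_prod, ← hm_def]
  have hρ₁int : Integrable (fun x : E => ‖x‖ ^ 2) ρ₁ := hμ.mono_measure hle1
  have hρ₂int : Integrable (fun x : E => ‖x‖ ^ 2) ρ₂ := hν.mono_measure hle2
  have hfstP : Integrable (fun z : E × E => ‖z.1‖ ^ 2) P := by
    have h1 : Integrable (fun x : E => ‖x‖ ^ 2) (P.map Prod.fst) := by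
      rw [hmfst]; exact hρ₁int.smul_measure hmtop
    exact (integrable_map_measure hsqm measurable_fst.aemeasurable).mp h1
  have hsndP : Integrable (fun z : E × E => ‖z.2‖ ^ 2) P := by
    have h1 : Integrable (fun x : E => ‖x‖ ^ 2) (P.map Prod.snd) := by
      rw [hmsnd]; exact hρ₂int.smul_measure hmtop
    exact (integrable_map_measure hsqm' measurable_snd.aemeasurable).mp h1
  have hptwise : ∀ z : E × E, dist z.1 z.2 ^ 2 ≤ 2 * ‖z.1‖ ^ 2 + 2 * ‖z.2‖ ^ 2 := by
    intro z
    have h1 : dist z.1 z.2 ≤ ‖z.1‖ + ‖z.2‖ := by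
      rw [dist_eq_norm]; exact norm_sub_le _ _
    nlinarith [dist_nonneg (x := z.1) (y := z.2), norm_nonneg z.1, norm_nonneg z.2,
      sq_nonneg (‖z.1‖ - ‖z.2‖), sq_nonneg (‖z.1‖ + ‖z.2‖)]
  have hsum_int : Integrable (fun z : E × E => 2 * ‖z.1‖ ^ 2 + 2 * ‖z.2‖ ^ 2) P :=
    (hfstP.const_mul 2).add (hsndP.const_mul 2)
  have hdist2 : Integrable (fun z : E × E => dist z.1 z.2 ^ 2) P := by
    refine hsum_int.mono' (continuous_dist.pow 2).aestronglyMeasurable ?_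
    refine Filter.Eventually.of_forall fun z => ?_
    rw [Real.norm_of_nonneg (by positivity)]
    exact hptwise z
  -- Cauchy-Schwarz
  have hJ := integral_le_sqrt_sq_mul_sqrt_mass P (fun z => dist_nonneg)
    continuous_dist.aestronglyMeasurable hdist2
  have hPuniv : (P Set.univ).toReal = δ * δ := by
    rw [hP_def, ← Set.univ_prod_univ, Measure.prod_prod, hmass, ← hm_def,
      ENNReal.toReal_mul, ← hδ_def]
  rw [hPuniv, Real.sqrt_mul_self hδ0] at hJ
  set M : ℝ := (∫ x, ‖x‖ ^ 2 ∂μ) + ∫ x, ‖x‖ ^ 2 ∂ν with hM_def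
  have hM0 : 0 ≤ M := by
    have h1 := integral_nonneg (μ := μ) (f := fun x : E => ‖x‖ ^ 2) fun x => by positivity
    have h2 := integral_nonneg (μ := ν) (f := fun x : E => ‖x‖ ^ 2) fun x => by positivity
    rw [hM_def]; linarith
  have hint_le : ∫ z : E × E, dist z.1 z.2 ^ 2 ∂P ≤ 2 * M * δ := by
    have hfst_int : ∫ z : E × E, ‖z.1‖ ^ 2 ∂P = δ * ∫ x, ‖x‖ ^ 2 ∂ρ₁ := by
      rw [← integral_map measurable_fst.aemeasurable hsqm, hmfst, integral_smul_measure,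
        ← hδ_def, smul_eq_mul]
    have hsnd_int : ∫ z : E × E, ‖z.2‖ ^ 2 ∂P = δ * ∫ x, ‖x‖ ^ 2 ∂ρ₂ := by
      rw [← integral_map measurable_snd.aemeasurable hsqm', hmsnd, integral_smul_measure,
        ← hδ_def, smul_eq_mul]
    have hμ1 : ∫ x, ‖x‖ ^ 2 ∂ρ₁ ≤ ∫ x, ‖x‖ ^ 2 ∂μ :=
      integral_mono_measure hle1 (Filter.Eventually.of_forall fun x => by positivity) hμ
    have hν1 : ∫ x, ‖x‖ ^ 2 ∂ρ₂ ≤ ∫ x, ‖x‖ ^ 2 ∂ν :=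
      integral_mono_measure hle2 (Filter.Eventually.of_forall fun x => by positivity) hν
    have step : ∫ z : E × E, dist z.1 z.2 ^ 2 ∂P
        ≤ ∫ z : E × E, (2 * ‖z.1‖ ^ 2 + 2 * ‖z.2‖ ^ 2) ∂P :=
      integral_mono hdist2 hsum_int hptwise
    rw [integral_add (hfstP.const_mul 2) (hsndP.const_mul 2), integral_const_mul,
      integral_const_mul, hfst_int, hsnd_int] at step
    have hρ₁0 : 0 ≤ ∫ x, ‖x‖ ^ 2 ∂ρ₁ := integral_nonneg fun x => by positivity
    have hρ₂0 : 0 ≤ ∫ x, ‖x‖ ^ 2 ∂ρ₂ := integral_nonneg fun x => by positivity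
    rw [hM_def]
    nlinarith
  have hJ2 : ∫ z : E × E, dist z.1 z.2 ∂P ≤ Real.sqrt (2 * M * δ) * δ := by
    refine hJ.trans ?_
    have := Real.sqrt_le_sqrt hint_le
    exact mul_le_mul_of_nonneg_right this hδ0
  calc δ⁻¹ * ∫ z : E × E, dist z.1 z.2 ∂P
      ≤ δ⁻¹ * (Real.sqrt (2 * M * δ) * δ) := by
        exact mul_le_mul_of_nonneg_left hJ2 (by positivity)
    _ = Real.sqrt (2 * M * δ) := by field_simp
    _ = Real.sqrt (2 * M) * Real.sqrt δ := by
        rw [Real.sqrt_mul (by linarith)]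
    _ ≤ Real.sqrt (2 * M) * Real.sqrt (tvDist μ ν) := by
        exact mul_le_mul_of_nonneg_left (Real.sqrt_le_sqrt htv) (Real.sqrt_nonneg _)

/-- for probability measures `μ`, `ν` on `ℝ^d` with finite second moments,
`W₁(μ, ν) ≤ √(2(∫‖x‖₂² dμ + ∫‖x‖₂² dν)) ⬝ √(D_TV(μ, ν))`. -/
theorem stmt11 {d : ℕ} (μ ν : Measure (EuclideanSpace ℝ (Fin d)))
    [IsProbabilityMeasure μ] [IsProbabilityMeasure ν]
    (hμ : Integrable (fun x => ‖x‖ ^ 2) μ) (hν : Integrable (fun x => ‖x‖ ^ 2) ν) :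
    W1 dist μ ν
      ≤ Real.sqrt (2 * ((∫ x, ‖x‖ ^ 2 ∂μ) + ∫ x, ‖x‖ ^ 2 ∂ν)) * Real.sqrt (tvDist μ ν) :=
  main_aux μ ν hμ hν
end
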